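/- Under the hypotheses of Proposition 4.8 (β > mnα, v(w_k) > (m-k)nα for 1 ≤ k ≤ m-1, v(w_0) = mnα), the identity v(y^j w^i) = jnα + iβ holds for all i ≥ 0 and 0 ≤ j ≤ 2m-1. -/

import Mathlib

open Polynomial
open scoped Classical

/-- The value of the term `a·y^j·w^i` (with `p = (i,j)`) under the map associated to
`(m, n, w, α, β)`: `-v_∞(a)·mα + jnα + iβ`, where `-v_∞(a) = intDegree a`. -/
noncomputable def termWeight (K : Type*) [Field K] (m n : ℕ) (α β : ℤ ×ₗ ℤ)
    (p : ℕ × ℕ) (a : RatFunc K) : ℤ ×ₗ ℤ :=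
  (a.intDegree * (m : ℤ)) • α + ((p.2 : ℤ) * (n : ℤ)) • α + (p.1 : ℤ) • β

/-- The restriction of the map associated to `(m, n, w, α, β)` to `K(x)`:
`v(h) = -v_∞(h)·mα`, with `v(0) = ∞`. -/
noncomputable def vBase (K : Type*) [Field K] (m : ℕ) (α : ℤ ×ₗ ℤ) (h : RatFunc K) :
    WithTop (ℤ ×ₗ ℤ) :=
  if h = 0 then ⊤ else ((h.intDegree * (m : ℤ)) • α : ℤ ×ₗ ℤ)

/-- An element of `K(x)[y]` lies in `K[x,y]` iff all its coefficients are polynomials. -/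
def polyCoeffs (K : Type*) [Field K] (f : Polynomial (RatFunc K)) : Prop :=
  ∀ i : ℕ, ∃ p : Polynomial K, f.coeff i = algebraMap (Polynomial K) (RatFunc K) p

section Aux

variable {K : Type*} [Field K]

theorem myIntDegree_add_eq_left {a b : RatFunc K} (ha : a ≠ 0) (hb : b ≠ 0)
    (h : b.intDegree < a.intDegree) : (a + b).intDegree = a.intDegree := by
  have hab : a + b ≠ 0 := by
    intro h0
    have : b = -a := by linear_combination h0
    rw [this, RatFunc.intDegree_neg] at h
    exact lt_irrefl _ h
  have h1 : (a + b).intDegree ≤ a.intDegree :=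
    (RatFunc.intDegree_add_le hb hab).trans_eq (max_eq_left h.le)
  refine le_antisymm h1 ?_
  have h2 : a = (a + b) + (-b) := by ring
  have h3 : a.intDegree ≤ max (a + b).intDegree (-b).intDegree := by
    calc a.intDegree = ((a + b) + (-b)).intDegree := by rw [← h2]
    _ ≤ max (a + b).intDegree (-b).intDegree :=
      RatFunc.intDegree_add_le (neg_ne_zero.mpr hb) (by rw [← h2]; exact ha)
  rw [RatFunc.intDegree_neg] at h3
  rcases max_cases (a + b).intDegree b.intDegree with ⟨he, _⟩ | ⟨he, _⟩
  · rw [he] at h3; exact h3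
  · rw [he] at h3; exact absurd (h3.trans_lt h) (lt_irrefl _).elim

variable (m n : ℕ) (α β : ℤ ×ₗ ℤ)

/-- weight as a function of the integer degree -/
noncomputable def tW (d : ℤ) (p : ℕ × ℕ) : ℤ ×ₗ ℤ :=
  (d * (m : ℤ)) • α + ((p.2 : ℤ) * (n : ℤ)) • α + (p.1 : ℤ) • β

theorem termWeight_eq_tW (p : ℕ × ℕ) (a : RatFunc K) :
    termWeight K m n α β p a = tW m n α β a.intDegree p := rfl

theorem smul_mul_neg (hm : 0 < m) (hα : α < 0) {d : ℤ} (hd : 0 < d) :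
    (d * (m : ℤ)) • α < 0 := by
  have h1 : (0 : ℤ) < d * m := mul_pos hd (by exact_mod_cast hm)
  have h2 := zsmul_pos (neg_pos.mpr hα) h1
  rw [zsmul_neg] at h2
  exact neg_pos.mp h2

theorem tW_strict_anti (hm : 0 < m) (hα : α < 0) {d1 d2 : ℤ} (h : d1 < d2) (p : ℕ × ℕ) :
    tW m n α β d2 p < tW m n α β d1 p := by
  unfold tW
  have key : (d2 * (m : ℤ)) • α < (d1 * (m : ℤ)) • α := by
    have h2 : ((d2 - d1) * (m : ℤ)) • α < 0 := smul_mul_neg m α hm hα (by omega)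
    have h3 : (d2 * (m : ℤ)) • α = (d1 * (m : ℤ)) • α + ((d2 - d1) * (m : ℤ)) • α := by
      rw [← add_smul]; ring_nf
    rw [h3]
    calc (d1 * (m : ℤ)) • α + ((d2 - d1) * (m : ℤ)) • α
        < (d1 * (m : ℤ)) • α + 0 := add_lt_add_right h2 _
    _ = (d1 * (m : ℤ)) • α := add_zero _
  exact add_lt_add_left (add_lt_add_left key _) _

theorem tW_anti (hm : 0 < m) (hα : α < 0) {d1 d2 : ℤ} (h : d1 ≤ d2) (p : ℕ × ℕ) :
    tW m n α β d2 p ≤ tW m n α β d1 p := by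
  rcases h.lt_or_eq with h | h
  · exact (tW_strict_anti m n α β hm hα h p).le
  · rw [h]

/-- The weight with `⊤` for the zero coefficient. -/
noncomputable def Wt (p : ℕ × ℕ) (a : RatFunc K) : WithTop (ℤ ×ₗ ℤ) :=
  if a = 0 then ⊤ else (tW m n α β a.intDegree p : ℤ ×ₗ ℤ)

theorem Wt_zero (p : ℕ × ℕ) : Wt m n α β p (0 : RatFunc K) = ⊤ := if_pos rfl

theorem Wt_of_ne (p : ℕ × ℕ) {a : RatFunc K} (ha : a ≠ 0) :
    Wt m n α β p a = ((tW m n α β a.intDegree p : ℤ ×ₗ ℤ) : WithTop (ℤ ×ₗ ℤ)) := if_neg ha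

theorem Wt_min (hm : 0 < m) (hα : α < 0) (p : ℕ × ℕ) (a b : RatFunc K) :
    min (Wt m n α β p a) (Wt m n α β p b) ≤ Wt m n α β p (a + b) := by
  by_cases ha : a = 0
  · rw [ha, zero_add]; exact min_le_right _ _
  by_cases hb : b = 0
  · rw [hb, add_zero]; exact min_le_left _ _
  by_cases hab : a + b = 0
  · rw [hab, Wt_zero]; exact le_top
  have hle := RatFunc.intDegree_add_le hb hab
  rw [Wt_of_ne m n α β p hab]
  rcases le_total a.intDegree b.intDegree with h | h
  · refine (min_le_right _ _).trans ?_
    rw [Wt_of_ne m n α β p hb, WithTop.coe_le_coe]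
    exact tW_anti m n α β hm hα (hle.trans_eq (max_eq_right h)) p
  · refine (min_le_left _ _).trans ?_
    rw [Wt_of_ne m n α β p ha, WithTop.coe_le_coe]
    exact tW_anti m n α β hm hα (hle.trans_eq (max_eq_left h)) p

theorem Wt_sum_le (hm : 0 < m) (hα : α < 0) {ι : Type*} (s : Finset ι) (g : ι → RatFunc K)
    (t : WithTop (ℤ ×ₗ ℤ)) (p : ℕ × ℕ) (h : ∀ k ∈ s, t ≤ Wt m n α β p (g k)) :
    t ≤ Wt m n α β p (∑ k ∈ s, g k) := by
  classical
  induction s using Finset.induction_on with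
  | empty => simp only [Finset.sum_empty]; rw [Wt_zero]; exact le_top
  | insert a s' hx ih =>
    rw [Finset.sum_insert hx]
    refine le_trans ?_ (Wt_min m n α β hm hα p _ _)
    exact le_min (h a (Finset.mem_insert_self _ _))
      (ih fun k hk => h k (Finset.mem_insert_of_mem hk))

theorem Wt_sum_lt (hm : 0 < m) (hα : α < 0) {ι : Type*} (s : Finset ι) (g : ι → RatFunc K)
    (t : ℤ ×ₗ ℤ) (p : ℕ × ℕ) (h : ∀ k ∈ s, (t : WithTop (ℤ ×ₗ ℤ)) < Wt m n α β p (g k)) :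
    (t : WithTop (ℤ ×ₗ ℤ)) < Wt m n α β p (∑ k ∈ s, g k) := by
  classical
  induction s using Finset.induction_on with
  | empty => simp only [Finset.sum_empty]; rw [Wt_zero]; exact WithTop.coe_lt_top _
  | insert a s' hx ih =>
    rw [Finset.sum_insert hx]
    refine lt_of_lt_of_le ?_ (Wt_min m n α β hm hα p _ _)
    exact lt_min (h a (Finset.mem_insert_self _ _))
      (ih fun k hk => h k (Finset.mem_insert_of_mem hk))

theorem Wt_add_eq (hm : 0 < m) (hα : α < 0) (p : ℕ × ℕ) {a b : RatFunc K} (ha : a ≠ 0)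
    (h : Wt m n α β p a < Wt m n α β p b) :
    Wt m n α β p (a + b) = Wt m n α β p a := by
  by_cases hb : b = 0
  · rw [hb, add_zero]
  have hdeg : b.intDegree < a.intDegree := by
    rw [Wt_of_ne m n α β p ha, Wt_of_ne m n α β p hb, WithTop.coe_lt_coe] at h
    by_contra hc
    push_neg at hc
    exact absurd (tW_anti m n α β hm hα hc p) (not_le.mpr h)
  have hab : a + b ≠ 0 := by
    intro h0
    have : b = -a := by linear_combination h0
    rw [this, RatFunc.intDegree_neg] at hdeg
    exact lt_irrefl _ hdeg
  rw [Wt_of_ne m n α β p hab, Wt_of_ne m n α β p ha, myIntDegree_add_eq_left ha hb hdeg]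

theorem coe_zsmul_top (k : ℤ) (a : ℤ ×ₗ ℤ) :
    ((k • a : ℤ ×ₗ ℤ) : WithTop (ℤ ×ₗ ℤ)) = k • (a : WithTop (ℤ ×ₗ ℤ)) := by
  cases k with
  | ofNat n =>
    rw [Int.ofNat_eq_coe, natCast_zsmul, natCast_zsmul, WithTop.coe_nsmul]
  | negSucc n =>
    rw [negSucc_zsmul, negSucc_zsmul, WithTop.LinearOrderedAddCommGroup.coe_neg,
      WithTop.coe_nsmul]

theorem tW_zero (m n : ℕ) (α β : ℤ ×ₗ ℤ) (a b : ℕ) :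
    tW m n α β 0 (a, b) = ((b : ℤ) * (n : ℤ)) • α + (a : ℤ) • β := by
  show ((0 : ℤ) * (m : ℤ)) • α + ((b : ℤ) * (n : ℤ)) • α + (a : ℤ) • β = _
  rw [zero_mul, zero_smul, zero_add]

theorem tW_add_deg (m n : ℕ) (α β : ℤ ×ₗ ℤ) (d1 d2 : ℤ) (p : ℕ × ℕ) :
    tW m n α β (d1 + d2) p = (d1 * (m : ℤ)) • α + tW m n α β d2 p := by
  show ((d1 + d2) * (m : ℤ)) • α + ((p.2 : ℤ) * (n : ℤ)) • α + (p.1 : ℤ) • β = _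
  show _ = (d1 * (m : ℤ)) • α + ((d2 * (m : ℤ)) • α + ((p.2 : ℤ) * (n : ℤ)) • α + (p.1 : ℤ) • β)
  rw [add_mul, add_zsmul]
  abel

end Aux


set_option maxHeartbeats 1000000 in
set_option synthInstance.maxHeartbeats 400000 in
/-- Equation (4.13) in Proposition 4.8: under hypotheses (i)-(iii), the identity
`v(y^j w^i) = jnα + iβ` holds for all `i ≥ 0` and `0 ≤ j ≤ 2m-1`. -/
theorem stmt12 (K : Type*) [Field K] (m n : ℕ) (hm : 0 < m) (hn : 0 < n)
    (hmn : Nat.Coprime m n)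
    (w : Polynomial (RatFunc K)) (hw : w.Monic) (hdeg : w.natDegree = m)
    (α β : ℤ ×ₗ ℤ) (hαneg : α < 0) (hβ : β ≠ 0)
    (hind : ∀ (k : ℤ) (γ : ℤ ×ₗ ℤ), 2 ≤ k → α ≠ k • γ)
    (hcom : ∀ a b : ℤ, a ≠ 0 → b ≠ 0 → a • α ≠ b • β)
    (v : Polynomial (RatFunc K) → WithTop (ℤ ×ₗ ℤ))
    (hexp : ∀ f : Polynomial (RatFunc K), ∃ c : (ℕ × ℕ) →₀ RatFunc K,
      (∀ p ∈ c.support, p.2 < m) ∧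
      f = c.sum (fun p a => Polynomial.C a * X ^ p.2 * w ^ p.1))
    (hv : ∀ (f : Polynomial (RatFunc K)) (c : (ℕ × ℕ) →₀ RatFunc K),
      (∀ p ∈ c.support, p.2 < m) →
      f = c.sum (fun p a => Polynomial.C a * X ^ p.2 * w ^ p.1) →
      v f = c.support.inf (fun p => ((termWeight K m n α β p (c p) : WithTop (ℤ ×ₗ ℤ)))))
    -- (i) `β > mnα`
    (hi : ((m : ℤ) * n) • α < β)
    -- (ii) `v(w_k) > (m-k)nα` for `1 ≤ k ≤ m-1`
    (hii : ∀ k : ℕ, 1 ≤ k → k < m →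
      ((((m : ℤ) - k) * n) • α : WithTop (ℤ ×ₗ ℤ)) < vBase K m α (w.coeff k))
    -- (iii) `v(w_0) = mnα`
    (hiii : vBase K m α (w.coeff 0) = (((m : ℤ) * n) • α : ℤ ×ₗ ℤ)) :
    ∀ (i j : ℕ), j ≤ 2 * m - 1 →
      v (X ^ j * w ^ i) = (((j : ℤ) * n) • α + (i : ℤ) • β : ℤ ×ₗ ℤ) := by
  -- basic facts about the expansion function
  have hF0 : ∀ p : ℕ × ℕ, (Polynomial.C (0 : RatFunc K) * X ^ p.2 * w ^ p.1) = 0 := by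
    intro p; simp
  have hFadd : ∀ (p : ℕ × ℕ) (a b : RatFunc K),
      (Polynomial.C (a + b) * X ^ p.2 * w ^ p.1 : Polynomial (RatFunc K))
        = Polynomial.C a * X ^ p.2 * w ^ p.1 + Polynomial.C b * X ^ p.2 * w ^ p.1 := by
    intro p a b; rw [map_add, add_mul, add_mul]
  -- main induction
  have main : ∀ j : ℕ, j ≤ 2 * m - 1 → ∀ i : ℕ, ∃ c : (ℕ × ℕ) →₀ RatFunc K,
      (∀ p : ℕ × ℕ, m ≤ p.2 → c p = 0) ∧
      (X ^ j * w ^ i : Polynomial (RatFunc K))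
        = c.sum (fun p a => Polynomial.C a * X ^ p.2 * w ^ p.1) ∧
      (∀ p : ℕ × ℕ, ((((j : ℤ) * n) • α + (i : ℤ) • β : ℤ ×ₗ ℤ) : WithTop (ℤ ×ₗ ℤ))
        ≤ Wt m n α β p (c p)) ∧
      Wt m n α β (i, if j < m then j else j - m) (c (i, if j < m then j else j - m))
        = ((((j : ℤ) * n) • α + (i : ℤ) • β : ℤ ×ₗ ℤ) : WithTop (ℤ ×ₗ ℤ)) := by
    intro j
    induction j using Nat.strong_induction_on with
    | _ j IH =>
    intro hj i
    by_cases hjm : j < m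
    · -- base case `j < m` : the singleton expansion
      refine ⟨Finsupp.single (i, j) 1, ?_, ?_, ?_, ?_⟩
      · intro p hp
        rw [Finsupp.single_apply, if_neg]
        rintro rfl
        exact absurd hp (not_le.mpr hjm)
      · rw [Finsupp.sum_single_index (hF0 _), map_one, one_mul]
      · intro p
        rcases eq_or_ne (i, j) p with h | h
        · rw [Finsupp.single_apply, if_pos h,
            Wt_of_ne m n α β p (one_ne_zero : (1 : RatFunc K) ≠ 0),
            RatFunc.intDegree_one, WithTop.coe_le_coe, ← h, tW_zero]
        · rw [Finsupp.single_apply, if_neg h, Wt_zero]; exact le_top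
      · rw [if_pos hjm, Finsupp.single_apply, if_pos rfl,
          Wt_of_ne m n α β _ (one_ne_zero : (1 : RatFunc K) ≠ 0),
          RatFunc.intDegree_one, WithTop.coe_inj, tW_zero]
    · -- inductive case `m ≤ j`
      have hm2 : m ≤ j := not_lt.mp hjm
      set r := j - m with hr
      have hjr : j = m + r := by omega
      have hrm : r < m := by omega
      have hjcast : (j : ℤ) = (m : ℤ) + (r : ℤ) := by exact_mod_cast congrArg (Nat.cast : ℕ → ℤ) hjr
      -- facts about the coefficients of w
      have hw0 : w.coeff 0 ≠ 0 := by
        intro h0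
        rw [vBase, if_pos h0] at hiii
        exact WithTop.top_ne_coe hiii
      have hd0 : ((w.coeff 0).intDegree * (m : ℤ)) • α = ((m : ℤ) * n) • α := by
        rw [vBase, if_neg hw0] at hiii
        exact_mod_cast hiii
      have hdk : ∀ k : ℕ, 1 ≤ k → k < m → w.coeff k ≠ 0 →
          (((m : ℤ) - k) * n) • α < ((w.coeff k).intDegree * (m : ℤ)) • α := by
        intro k h1 h2 hne
        have h3 := hii k h1 h2
        rw [vBase, if_neg hne, ← coe_zsmul_top, WithTop.coe_lt_coe] at h3
        exact h3
      -- sub-expansions from the induction hypothesis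
      have He : ∀ k : ℕ, ∃ e : (ℕ × ℕ) →₀ RatFunc K, k < m →
          (∀ p : ℕ × ℕ, m ≤ p.2 → e p = 0) ∧
          (X ^ (r + k) * w ^ i : Polynomial (RatFunc K))
            = e.sum (fun p a => Polynomial.C a * X ^ p.2 * w ^ p.1) ∧
          (∀ p : ℕ × ℕ, (((((r + k : ℕ) : ℤ) * n) • α + (i : ℤ) • β : ℤ ×ₗ ℤ)
              : WithTop (ℤ ×ₗ ℤ)) ≤ Wt m n α β p (e p)) ∧
          Wt m n α β (i, if r + k < m then r + k else r + k - m)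
              (e (i, if r + k < m then r + k else r + k - m))
            = (((((r + k : ℕ) : ℤ) * n) • α + (i : ℤ) • β : ℤ ×ₗ ℤ) : WithTop (ℤ ×ₗ ℤ)) := by
        intro k
        by_cases hk : k < m
        · obtain ⟨e, h⟩ := IH (r + k) (by omega) (by omega) i
          exact ⟨e, fun _ => h⟩
        · exact ⟨0, fun h => absurd h hk⟩
      choose e he using He
      -- the identity X^m = w - Σ_{k<m} w_k X^k
      have hXm : (X ^ m : Polynomial (RatFunc K))
          = w - ∑ k ∈ Finset.range m, Polynomial.C (w.coeff k) * X ^ k := by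
        have h1 : w = ∑ k ∈ Finset.range (m + 1), Polynomial.C (w.coeff k) * X ^ k := by
          have h2 := w.as_sum_range_C_mul_X_pow
          rwa [hdeg] at h2
        have h3 : w.coeff m = 1 := by
          have h4 := hw.coeff_natDegree
          rwa [hdeg] at h4
        rw [eq_sub_iff_add_eq]
        conv_rhs => rw [h1]
        rw [Finset.sum_range_succ, h3, map_one, one_mul, add_comm]
      -- the expansion of X^j w^i
      set c : (ℕ × ℕ) →₀ RatFunc K :=
        Finsupp.single (i + 1, r) 1 +
          ∑ k ∈ Finset.range m, (-(w.coeff k)) • e k with hc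
      -- the polynomial identity
      have expand : (X ^ j * w ^ i : Polynomial (RatFunc K))
          = X ^ r * w ^ (i + 1)
            - ∑ k ∈ Finset.range m, Polynomial.C (w.coeff k) * (X ^ (r + k) * w ^ i) := by
        rw [hjr, pow_add, hXm, sub_mul, sub_mul]
        congr 1
        · ring
        · rw [Finset.sum_mul, Finset.sum_mul]
          refine Finset.sum_congr rfl fun k _ => ?_
          rw [pow_add]
          ring
      have hsum : (X ^ j * w ^ i : Polynomial (RatFunc K))
          = c.sum (fun p a => Polynomial.C a * X ^ p.2 * w ^ p.1) := by
        rw [hc, Finsupp.sum_add_index' hF0 hFadd, Finsupp.sum_single_index (hF0 _),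
          ← Finsupp.sum_finsetSum_index hF0 hFadd]
        have hterm : ∀ k ∈ Finset.range m,
            ((-(w.coeff k)) • e k).sum (fun p a => Polynomial.C a * X ^ p.2 * w ^ p.1)
              = -(Polynomial.C (w.coeff k) * (X ^ (r + k) * w ^ i)) := by
          intro k hk
          rw [Finsupp.sum_smul_index' hF0]
          have h5 : ((e k).sum fun p a => Polynomial.C ((-(w.coeff k)) • a) * X ^ p.2 * w ^ p.1)
              = (e k).sum fun p a =>
                  Polynomial.C (-(w.coeff k)) * (Polynomial.C a * X ^ p.2 * w ^ p.1) := by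
            refine Finsupp.sum_congr fun p _ => ?_
            rw [smul_eq_mul, map_mul]
            ring
          rw [h5, ← Finsupp.mul_sum, ← (he k (Finset.mem_range.mp hk)).2.1, map_neg, neg_mul]
        rw [Finset.sum_congr rfl hterm, map_one, one_mul, Finset.sum_neg_distrib,
          ← sub_eq_add_neg]
        exact expand
      -- support condition
      have hsupp : ∀ p : ℕ × ℕ, m ≤ p.2 → c p = 0 := by
        intro p hp
        rw [hc, Finsupp.add_apply, Finsupp.single_apply,
          if_neg (by rintro rfl; exact absurd hp (not_le.mpr hrm)), zero_add,
          Finset.sum_apply']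
        refine Finset.sum_eq_zero fun k hk => ?_
        rw [Finsupp.smul_apply, (he k (Finset.mem_range.mp hk)).1 p hp, smul_zero]
      -- strict weight bound for the terms with k ≥ 1
      have hterm_lt : ∀ k : ℕ, 0 < k → k < m → ∀ p : ℕ × ℕ,
          ((((j : ℤ) * n) • α + (i : ℤ) • β : ℤ ×ₗ ℤ) : WithTop (ℤ ×ₗ ℤ))
            < Wt m n α β p (-(w.coeff k) * e k p) := by
        intro k hk1 hk2 p
        by_cases hz : -(w.coeff k) * e k p = 0
        · rw [hz, Wt_zero]; exact WithTop.coe_lt_top _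
        have hwk : w.coeff k ≠ 0 := fun h0 => hz (by rw [h0, neg_zero, zero_mul])
        have hep : e k p ≠ 0 := fun h0 => hz (by rw [h0, mul_zero])
        have hdeg2 : (-(w.coeff k) * e k p).intDegree
            = (w.coeff k).intDegree + (e k p).intDegree := by
          rw [neg_mul, RatFunc.intDegree_neg, RatFunc.intDegree_mul hwk hep]
        have h3 := (he k hk2).2.2.1 p
        rw [Wt_of_ne m n α β p hep, WithTop.coe_le_coe] at h3
        rw [Wt_of_ne m n α β p hz, hdeg2, WithTop.coe_lt_coe, tW_add_deg]
        have h6 := hdk k hk1 hk2 hwk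
        calc ((j : ℤ) * n) • α + (i : ℤ) • β
            = (((m : ℤ) - k) * n) • α + (((r + k : ℕ) : ℤ) * n) • α + (i : ℤ) • β := by
              rw [hjcast]; push_cast; module
          _ < ((w.coeff k).intDegree * (m : ℤ)) • α
              + (((r + k : ℕ) : ℤ) * n) • α + (i : ℤ) • β :=
              add_lt_add_left (add_lt_add_left h6 _) _
          _ ≤ ((w.coeff k).intDegree * (m : ℤ)) • α + tW m n α β (e k p).intDegree p := by
              rw [add_assoc]
              exact add_le_add_right h3 _
      -- weight bound for the term with k = 0
      have hterm0_le : ∀ p : ℕ × ℕ,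
          ((((j : ℤ) * n) • α + (i : ℤ) • β : ℤ ×ₗ ℤ) : WithTop (ℤ ×ₗ ℤ))
            ≤ Wt m n α β p (-(w.coeff 0) * e 0 p) := by
        intro p
        by_cases hz : -(w.coeff 0) * e 0 p = 0
        · rw [hz, Wt_zero]; exact le_top
        have hep : e 0 p ≠ 0 := fun h0 => hz (by rw [h0, mul_zero])
        have hdeg2 : (-(w.coeff 0) * e 0 p).intDegree
            = (w.coeff 0).intDegree + (e 0 p).intDegree := by
          rw [neg_mul, RatFunc.intDegree_neg, RatFunc.intDegree_mul hw0 hep]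
        have h3 := (he 0 hm).2.2.1 p
        simp only [Nat.add_zero] at h3
        rw [Wt_of_ne m n α β p hep, WithTop.coe_le_coe] at h3
        rw [Wt_of_ne m n α β p hz, hdeg2, WithTop.coe_le_coe, tW_add_deg, hd0]
        calc ((j : ℤ) * n) • α + (i : ℤ) • β
            = ((m : ℤ) * n) • α + ((((r : ℕ) : ℤ) * n) • α + (i : ℤ) • β) := by
              rw [hjcast]; push_cast; module
          _ ≤ ((m : ℤ) * n) • α + tW m n α β (e 0 p).intDegree p := add_le_add_right h3 _
      -- the third condition
      have hthird : ∀ p : ℕ × ℕ,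
          ((((j : ℤ) * n) • α + (i : ℤ) • β : ℤ ×ₗ ℤ) : WithTop (ℤ ×ₗ ℤ))
            ≤ Wt m n α β p (c p) := by
        intro p
        rw [hc, Finsupp.add_apply, Finset.sum_apply']
        refine le_trans (le_min ?_ ?_) (Wt_min m n α β hm hαneg p _ _)
        · rcases eq_or_ne (i + 1, r) p with h | h
          · rw [Finsupp.single_apply, if_pos h,
              Wt_of_ne m n α β p (one_ne_zero : (1 : RatFunc K) ≠ 0),
              RatFunc.intDegree_one, WithTop.coe_le_coe, ← h, tW_zero]
            refine le_of_lt ?_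
            calc ((j : ℤ) * n) • α + (i : ℤ) • β
                = ((m : ℤ) * n) • α + ((((r : ℕ) : ℤ) * n) • α + (i : ℤ) • β) := by
                  rw [hjcast]; push_cast; module
              _ < β + ((((r : ℕ) : ℤ) * n) • α + (i : ℤ) • β) := add_lt_add_left hi _
              _ = ((r : ℤ) * n) • α + ((i + 1 : ℕ) : ℤ) • β := by push_cast; module
          · rw [Finsupp.single_apply, if_neg h, Wt_zero]; exact le_top
        · refine Wt_sum_le m n α β hm hαneg _ _ _ p fun k hk => ?_
          rw [Finsupp.smul_apply, smul_eq_mul, neg_mul]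
          rw [← neg_mul]
          rcases Nat.eq_zero_or_pos k with rfl | hk1
          · exact hterm0_le p
          · exact (hterm_lt k hk1 (Finset.mem_range.mp hk) p).le
      -- the fourth condition : exact value at the point (i, r)
      have hrange : Finset.range m = insert 0 (Finset.Ioo 0 m) := by
        ext x
        simp only [Finset.mem_range, Finset.mem_insert, Finset.mem_Ioo]
        omega
      have h40 := (he 0 hm).2.2.2
      simp only [Nat.add_zero] at h40
      rw [if_pos hrm] at h40
      have he0ne : e 0 (i, r) ≠ 0 := by
        intro h0
        rw [h0, Wt_zero] at h40
        exact WithTop.top_ne_coe h40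
      have hde0 : tW m n α β (e 0 (i, r)).intDegree (i, r)
          = ((r : ℤ) * n) • α + (i : ℤ) • β := by
        rw [Wt_of_ne m n α β _ he0ne, WithTop.coe_inj] at h40
        exact h40
      have ha0ne : -(w.coeff 0) * e 0 (i, r) ≠ 0 :=
        mul_ne_zero (neg_ne_zero.mpr hw0) he0ne
      have ha0deg : (-(w.coeff 0) * e 0 (i, r)).intDegree
          = (w.coeff 0).intDegree + (e 0 (i, r)).intDegree := by
        rw [neg_mul, RatFunc.intDegree_neg, RatFunc.intDegree_mul hw0 he0ne]
      have hWa0 : Wt m n α β (i, r) (-(w.coeff 0) * e 0 (i, r))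
          = ((((j : ℤ) * n) • α + (i : ℤ) • β : ℤ ×ₗ ℤ) : WithTop (ℤ ×ₗ ℤ)) := by
        rw [Wt_of_ne m n α β _ ha0ne, ha0deg, WithTop.coe_inj, tW_add_deg, hde0, hd0, hjcast]
        push_cast
        module
      have hfourth : Wt m n α β (i, r) (c (i, r))
          = ((((j : ℤ) * n) • α + (i : ℤ) • β : ℤ ×ₗ ℤ) : WithTop (ℤ ×ₗ ℤ)) := by
        rw [hc, Finsupp.add_apply, Finsupp.single_apply, if_neg (by simp), zero_add,
          Finset.sum_apply', hrange, Finset.sum_insert (by simp)]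
        simp only [Finsupp.smul_apply, smul_eq_mul]
        have hlt2 : Wt m n α β (i, r) (-(w.coeff 0) * e 0 (i, r))
            < Wt m n α β (i, r) (∑ k ∈ Finset.Ioo 0 m, -(w.coeff k) * e k (i, r)) := by
          rw [hWa0]
          refine Wt_sum_lt m n α β hm hαneg _ _ _ _ fun k hk => ?_
          obtain ⟨hk1, hk2⟩ := Finset.mem_Ioo.mp hk
          exact hterm_lt k hk1 hk2 (i, r)
        rw [show (-(w.coeff 0) * (e 0) (i, r) + ∑ k ∈ Finset.Ioo 0 m, -(w.coeff k) * (e k) (i, r))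
            = (-(w.coeff 0) * (e 0) (i, r)) + ∑ k ∈ Finset.Ioo 0 m, -(w.coeff k) * (e k) (i, r)
            from rfl,
          Wt_add_eq m n α β hm hαneg _ ha0ne hlt2, hWa0]
      refine ⟨c, hsupp, hsum, hthird, ?_⟩
      rw [if_neg hjm]
      exact hfourth
  -- conclusion
  intro i j hj
  obtain ⟨c, h1, h2, h3, h4⟩ := main j hj i
  have hsupp' : ∀ p ∈ c.support, p.2 < m := by
    intro p hp
    by_contra hpp
    exact (Finsupp.mem_support_iff.mp hp) (h1 p (not_lt.mp hpp))
  rw [hv _ c hsupp' h2]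
  apply le_antisymm
  · have hne : c (i, if j < m then j else j - m) ≠ 0 := by
      intro h0
      rw [h0, Wt_zero] at h4
      exact WithTop.top_ne_coe h4
    refine le_trans (Finset.inf_le (Finsupp.mem_support_iff.mpr hne)) ?_
    rw [termWeight_eq_tW, ← Wt_of_ne m n α β _ hne, h4]
  · refine Finset.le_inf fun p hp => ?_
    have hne := Finsupp.mem_support_iff.mp hp
    have h5 := h3 p
    rwa [Wt_of_ne m n α β p hne, ← termWeight_eq_tW] at h5
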